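/- Let X be a Banach space and let C ⊆ X be a weakly compact, convex set having the Opial property. Suppose T : C → C is (α₁,α₂)-nonexpansive (for a multi-index (α₁,α₂) with α₁ > 0, α₂ > 0 and α₁ + α₂ = 1) and T is asymptotically regular at some x ∈ C. Then for every y in the weak ω-limit set ω_w(x) of the orbit (Tⁿx)ₙ, the limit limₙ ‖Tⁿx − y‖ exists. -/

import Mathlib

open Filter Topology

set_option maxHeartbeats 1000000

/-- A sequence `u` converges weakly to `y` in a normed space. -/
def WeakConvSeq {X : Type*} [NormedAddCommGroup X] [NormedSpace ℝ X]
    (u : ℕ → X) (y : X) : Prop :=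
  ∀ f : X →L[ℝ] ℝ, Filter.Tendsto (fun n => f (u n)) Filter.atTop (nhds (f y))

/-- A subset `C` has the Opial property. -/
def OpialSet {X : Type*} [NormedAddCommGroup X] [NormedSpace ℝ X] (C : Set X) : Prop :=
  ∀ (u : ℕ → X) (u₀ : X), (∀ n, u n ∈ C) → WeakConvSeq u u₀ →
    ∀ v : X, v ≠ u₀ →
      Filter.liminf (fun n => ‖u n - u₀‖) Filter.atTop <
        Filter.liminf (fun n => ‖u n - v‖) Filter.atTop

/-- The weak ω-limit set of the orbit of `x` under `T`: all points of `C` which are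
weak limits of some subsequence of `(T^[n] x)ₙ`. -/
def omegaW {X : Type*} [NormedAddCommGroup X] [NormedSpace ℝ X]
    (T : X → X) (C : Set X) (x : X) : Set X :=
  {y | y ∈ C ∧ ∃ φ : ℕ → ℕ, StrictMono φ ∧ WeakConvSeq (fun k => T^[φ k] x) y}

private lemma liminf_const_mul_nonneg' {c : ℝ} (hc : 0 ≤ c) {f : ℕ → ℝ}
    (h0 : ∀ k, 0 ≤ f k) (hb : ∃ B, ∀ k, f k ≤ B) :
    Filter.liminf (fun n => c * f n) Filter.atTop = c * Filter.liminf f Filter.atTop := by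
  have hub : IsBoundedUnder (· ≤ ·) atTop f := isBoundedUnder_of hb
  have hlb : IsBoundedUnder (· ≥ ·) atTop f := isBoundedUnder_of ⟨0, h0⟩
  exact (Monotone.map_liminf_of_continuousAt (f := fun x : ℝ => c * x)
    (fun a b hab => mul_le_mul_of_nonneg_left hab hc) f
    (continuous_mul_left c).continuousAt hub.isCoboundedUnder_ge hlb).symm

private lemma key_liminf {f g h e : ℕ → ℝ}
    (hf0 : ∀ k, 0 ≤ f k) (hg0 : ∀ k, 0 ≤ g k) (hh0 : ∀ k, 0 ≤ h k)
    (hfb : ∃ B, ∀ k, f k ≤ B) (hgb : ∃ B, ∀ k, g k ≤ B) (hhb : ∃ B, ∀ k, h k ≤ B)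
    (he : Filter.Tendsto e Filter.atTop (nhds 0))
    (hkey : ∀ k, f k + g k ≤ e k + h k) :
    Filter.liminf f Filter.atTop + Filter.liminf g Filter.atTop ≤
      Filter.liminf h Filter.atTop := by
  obtain ⟨Bf, hBf⟩ := hfb
  obtain ⟨Bg, hBg⟩ := hgb
  obtain ⟨Bh, hBh⟩ := hhb
  have hfub : IsBoundedUnder (· ≤ ·) atTop f := isBoundedUnder_of ⟨Bf, hBf⟩
  have hgub : IsBoundedUnder (· ≤ ·) atTop g := isBoundedUnder_of ⟨Bg, hBg⟩
  have hhub : IsBoundedUnder (· ≤ ·) atTop h := isBoundedUnder_of ⟨Bh, hBh⟩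
  have hflb : IsBoundedUnder (· ≥ ·) atTop f := isBoundedUnder_of ⟨0, hf0⟩
  have hglb : IsBoundedUnder (· ≥ ·) atTop g := isBoundedUnder_of ⟨0, hg0⟩
  have hhlb : IsBoundedUnder (· ≥ ·) atTop h := isBoundedUnder_of ⟨0, hh0⟩
  have h1 : liminf f atTop + liminf g atTop ≤ liminf (f + g) atTop :=
    le_liminf_add hflb hfub hglb hgub.isCoboundedUnder_ge
  have h2 : liminf (f + g) atTop ≤ liminf (e + h) atTop := by
    have hbb : IsBoundedUnder (· ≤ ·) atTop (e + h) :=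
      isBoundedUnder_le_add he.isBoundedUnder_le hhub
    have hgg : IsBoundedUnder (· ≥ ·) atTop (f + g) :=
      isBoundedUnder_ge_add hflb hglb
    exact liminf_le_liminf (Filter.Eventually.of_forall fun k => hkey k) hgg
      hbb.isCoboundedUnder_ge
  have h3 : liminf (e + h) atTop ≤ limsup e atTop + liminf h atTop :=
    liminf_add_le he.isBoundedUnder_ge he.isBoundedUnder_le hhlb hhub.isCoboundedUnder_ge
  have h4 : limsup e atTop = (0 : ℝ) := he.limsup_eq
  linarith

theorem norm_limit_exists_of_mean_nonexpansive_two
    {X : Type*} [NormedAddCommGroup X] [NormedSpace ℝ X] [CompleteSpace X]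
    (C : Set X) (hC_wcompact : IsCompact (toWeakSpace ℝ X '' C))
    (hC_convex : Convex ℝ C) (hC_opial : OpialSet C)
    (T : X → X) (hT : Set.MapsTo T C C)
    (α₁ α₂ : ℝ) (hα₁ : 0 < α₁) (hα₂ : 0 < α₂) (hα : α₁ + α₂ = 1)
    (hne : ∀ x ∈ C, ∀ y ∈ C,
      α₁ * ‖T x - T y‖ + α₂ * ‖T (T x) - T (T y)‖ ≤ ‖x - y‖)
    (x : X) (hx : x ∈ C)
    (har : Filter.Tendsto (fun n => ‖T^[n] x - T^[n + 1] x‖) Filter.atTop (nhds 0)) :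
    ∀ y ∈ omegaW T C x,
      ∃ L : ℝ, Filter.Tendsto (fun n => ‖T^[n] x - y‖) Filter.atTop (nhds L) := by
  -- C is norm-bounded, by weak compactness and Banach–Steinhaus
  have hCbdd : ∃ M : ℝ, ∀ z ∈ C, ‖z‖ ≤ M := by
    have hpt : ∀ f : StrongDual ℝ X, ∃ B, ∀ z ∈ C, ‖f z‖ ≤ B := by
      intro f
      let f' : WeakSpace ℝ X →L[ℝ] ℝ :=
        { toLinearMap := (f : X →ₗ[ℝ] ℝ).comp ((toWeakSpace ℝ X).symm : WeakSpace ℝ X →ₗ[ℝ] X)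
          cont := WeakBilin.eval_continuous (topDualPairing ℝ X).flip _ }
      have hcomp : IsCompact (f' '' (toWeakSpace ℝ X '' C)) :=
        hC_wcompact.image f'.continuous
      obtain ⟨B, hB⟩ := isBounded_iff_forall_norm_le.mp hcomp.isBounded
      refine ⟨B, fun z hz => ?_⟩
      have := hB (f' (toWeakSpace ℝ X z)) ⟨toWeakSpace ℝ X z, ⟨z, hz, rfl⟩, rfl⟩
      exact this
    obtain ⟨M, hM⟩ := banach_steinhaus
      (g := fun c : C => NormedSpace.inclusionInDoubleDual ℝ X (c : X))
      (fun f => by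
        obtain ⟨B, hB⟩ := hpt f
        exact ⟨B, fun c => hB c c.2⟩)
    refine ⟨M, fun z hz => ?_⟩
    have hiso : ‖NormedSpace.inclusionInDoubleDual ℝ X z‖ = ‖z‖ :=
      (NormedSpace.inclusionInDoubleDualLi ℝ (E := X)).norm_map z
    rw [← hiso]
    exact hM ⟨z, hz⟩
  obtain ⟨M, hM⟩ := hCbdd
  rintro y ⟨hyC, φ, hφ, hweak⟩
  have hTnC : ∀ n, T^[n] x ∈ C := fun n => hT.iterate n hx
  set u : ℕ → X := fun k => T^[φ k] x with hu
  have huC : ∀ k, u k ∈ C := fun k => hTnC (φ k)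
  -- asymptotic regularity along the subsequence
  have hε₁ : Filter.Tendsto (fun k => ‖u k - T (u k)‖) Filter.atTop (nhds 0) := by
    have := har.comp hφ.tendsto_atTop
    simpa [hu, Function.comp_def, Function.iterate_succ_apply'] using this
  have hsucc : Filter.Tendsto (fun k => ‖T (u k) - T (T (u k))‖) Filter.atTop (nhds 0) := by
    have h1 : Filter.Tendsto (fun k => φ k + 1) Filter.atTop Filter.atTop :=
      (tendsto_add_atTop_nat 1).comp hφ.tendsto_atTop
    have := har.comp h1
    simpa [hu, Function.comp_def, Function.iterate_succ_apply'] using this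
  have hε₂ : Filter.Tendsto (fun k => ‖u k - T (T (u k))‖) Filter.atTop (nhds 0) := by
    have hb : ∀ k, ‖u k - T (T (u k))‖ ≤ ‖u k - T (u k)‖ + ‖T (u k) - T (T (u k))‖ :=
      fun k => norm_sub_le_norm_sub_add_norm_sub _ _ _
    have hsum : Filter.Tendsto
        (fun k => ‖u k - T (u k)‖ + ‖T (u k) - T (T (u k))‖) Filter.atTop (nhds 0) := by
      simpa using hε₁.add hsucc
    exact squeeze_zero (fun k => norm_nonneg _) hb hsum
  -- y is a fixed point of T
  have hfix : T y = y := by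
    by_contra hTy
    -- liminf notation
    set r : X → ℝ := fun v => Filter.liminf (fun k => ‖u k - v‖) Filter.atTop with hr
    have hub : ∀ v : X, ∃ B, ∀ k, ‖u k - v‖ ≤ B := fun v =>
      ⟨M + ‖v‖, fun k => (norm_sub_le _ _).trans (by
        have := hM (u k) (huC k); linarith)⟩
    have hkey : ∀ k, α₁ * ‖u k - T y‖ + α₂ * ‖u k - T (T y)‖ ≤
        (α₁ * ‖u k - T (u k)‖ + α₂ * ‖u k - T (T (u k))‖) + ‖u k - y‖ := by
      intro k
      have h0 := hne (u k) (huC k) y hyC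
      have t1 : ‖u k - T y‖ ≤ ‖u k - T (u k)‖ + ‖T (u k) - T y‖ :=
        norm_sub_le_norm_sub_add_norm_sub _ _ _
      have t2 : ‖u k - T (T y)‖ ≤ ‖u k - T (T (u k))‖ + ‖T (T (u k)) - T (T y)‖ :=
        norm_sub_le_norm_sub_add_norm_sub _ _ _
      have m1 := mul_le_mul_of_nonneg_left t1 hα₁.le
      have m2 := mul_le_mul_of_nonneg_left t2 hα₂.le
      nlinarith [m1, m2, h0]
    have he : Filter.Tendsto
        (fun k => α₁ * ‖u k - T (u k)‖ + α₂ * ‖u k - T (T (u k))‖)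
        Filter.atTop (nhds 0) := by
      simpa using (hε₁.const_mul α₁).add (hε₂.const_mul α₂)
    have hmain : Filter.liminf (fun k => α₁ * ‖u k - T y‖) Filter.atTop +
        Filter.liminf (fun k => α₂ * ‖u k - T (T y)‖) Filter.atTop ≤ r y := by
      refine key_liminf (f := fun k => α₁ * ‖u k - T y‖) (g := fun k => α₂ * ‖u k - T (T y)‖)
        (h := fun k => ‖u k - y‖)
        (fun k => by positivity) (fun k => by positivity) (fun k => norm_nonneg _)
        ?_ ?_ (hub y) he hkey
      · obtain ⟨B, hB⟩ := hub (T y)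
        exact ⟨α₁ * B, fun k => mul_le_mul_of_nonneg_left (hB k) hα₁.le⟩
      · obtain ⟨B, hB⟩ := hub (T (T y))
        exact ⟨α₂ * B, fun k => mul_le_mul_of_nonneg_left (hB k) hα₂.le⟩
    have hs1 : Filter.liminf (fun k => α₁ * ‖u k - T y‖) Filter.atTop = α₁ * r (T y) :=
      liminf_const_mul_nonneg' hα₁.le (fun k => norm_nonneg _) (hub (T y))
    have hs2 : Filter.liminf (fun k => α₂ * ‖u k - T (T y)‖) Filter.atTop = α₂ * r (T (T y)) :=
      liminf_const_mul_nonneg' hα₂.le (fun k => norm_nonneg _) (hub (T (T y)))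
    rw [hs1, hs2] at hmain
    have hOp1 : r y < r (T y) := hC_opial u y huC hweak (T y) hTy
    have ery : α₁ * r y + α₂ * r y = r y := by rw [← add_mul, hα, one_mul]
    by_cases h2 : T (T y) = y
    · rw [h2] at hmain
      have hp1 := mul_pos hα₁ (sub_pos.2 hOp1)
      nlinarith [hp1, hmain, ery]
    · have hOp2 : r y < r (T (T y)) := hC_opial u y huC hweak (T (T y)) h2
      have hp1 := mul_pos hα₁ (sub_pos.2 hOp1)
      have hp2 := mul_pos hα₂ (sub_pos.2 hOp2)
      nlinarith [hp1, hp2, hmain, ery]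
  -- the norms of the orbit: almost monotone behaviour
  set a : ℕ → ℝ := fun n => ‖T^[n] x - y‖ with ha
  have h1 : ∀ n, α₁ * a (n + 1) + α₂ * a (n + 1 + 1) ≤ a n := by
    intro n
    have h0 := hne (T^[n] x) (hTnC n) y hyC
    simp only [hfix] at h0
    simpa [ha, Function.iterate_succ_apply'] using h0
  set c : ℕ → ℝ := fun n => a n + α₂ * a (n + 1) with hc
  have hc_anti : Antitone c := by
    refine antitone_nat_of_succ_le fun n => ?_
    have h2 := h1 n
    have e1 : α₁ * a (n + 1) + α₂ * a (n + 1) = a (n + 1) := by rw [← add_mul, hα, one_mul]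
    simp only [hc]
    nlinarith [h2, e1]
  have hc_bdd : BddBelow (Set.range c) := by
    refine ⟨0, fun z hz => ?_⟩
    obtain ⟨n, rfl⟩ := hz
    have := norm_nonneg (T^[n] x - y)
    have := norm_nonneg (T^[n + 1] x - y)
    simp only [hc, ha]
    positivity
  have hc_tendsto : Filter.Tendsto c Filter.atTop (nhds (⨅ n, c n)) :=
    tendsto_atTop_ciInf hc_anti hc_bdd
  have hd : Filter.Tendsto (fun n => a (n + 1) - a n) Filter.atTop (nhds 0) := by
    refine squeeze_zero_norm (fun n => ?_) har
    have := abs_norm_sub_norm_le (T^[n + 1] x - y) (T^[n] x - y)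
    have heq : (T^[n + 1] x - y) - (T^[n] x - y) = T^[n + 1] x - T^[n] x := by abel
    rw [heq] at this
    calc ‖a (n + 1) - a n‖ = |‖T^[n + 1] x - y‖ - ‖T^[n] x - y‖| := by
          simp [ha, Real.norm_eq_abs]
      _ ≤ ‖T^[n + 1] x - T^[n] x‖ := this
      _ = ‖T^[n] x - T^[n + 1] x‖ := norm_sub_rev _ _
  have hden : (1 : ℝ) + α₂ ≠ 0 := by positivity
  have hkey : ∀ n, a n = (c n - α₂ * (a (n + 1) - a n)) / (1 + α₂) := by
    intro n
    simp only [hc]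
    field_simp
    ring
  refine ⟨((⨅ n, c n) - α₂ * 0) / (1 + α₂), ?_⟩
  have h5 := (hc_tendsto.sub (hd.const_mul α₂)).div_const (1 + α₂)
  have h6 : (fun n => (c n - α₂ * (a (n + 1) - a n)) / (1 + α₂)) = a :=
    funext fun n => (hkey n).symm
  rw [h6] at h5
  exact h5
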